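/- If f ∈ C¹[0,1], then for all n ≥ j ≥ 2 and x ∈ [0,1], |B_n(f;x) − B_{n,j}(f;x)| ≤ ((j−1)/n) ‖f'‖_∞. -/
import Mathlib


open Set Finset

/-- Bernstein basis polynomial `p_{n,k}(x) = C(n,k) x^k (1-x)^{n-k}`. -/
noncomputable def bp (n k : ℕ) (x : ℝ) : ℝ :=
  (n.choose k : ℝ) * x ^ k * (1 - x) ^ (n - k)

/-- AKR node `t_{n,k}^j = (k(k-1)⋯(k-j+1)/(n(n-1)⋯(n-j+1)))^{1/j}`. -/
noncomputable def akrNode (n j k : ℕ) : ℝ :=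
  ((∏ i ∈ Finset.range j, ((k : ℝ) - i)) / (∏ i ∈ Finset.range j, ((n : ℝ) - i))) ^ ((j : ℝ)⁻¹)

/-- Classical Bernstein operator. -/
noncomputable def bern (n : ℕ) (f : ℝ → ℝ) (x : ℝ) : ℝ :=
  ∑ k ∈ Finset.range (n + 1), f ((k : ℝ) / n) * bp n k x

/-- Aldaz–Kounchev–Render operator. -/
noncomputable def akr (n j : ℕ) (f : ℝ → ℝ) (x : ℝ) : ℝ :=
  ∑ k ∈ Finset.range (n + 1), f (akrNode n j k) * bp n k x

/-- Bivariate tensor-product Bernstein operator. -/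
noncomputable def bern2 (n m : ℕ) (f : ℝ → ℝ → ℝ) (x y : ℝ) : ℝ :=
  ∑ i ∈ Finset.range (n + 1), ∑ k ∈ Finset.range (m + 1),
    f ((i : ℝ) / n) ((k : ℝ) / m) * bp n i x * bp m k y

/-- Bivariate tensor-product AKR operator. -/
noncomputable def akr2 (n m j : ℕ) (f : ℝ → ℝ → ℝ) (x y : ℝ) : ℝ :=
  ∑ i ∈ Finset.range (n + 1), ∑ k ∈ Finset.range (m + 1),
    f (akrNode n j i) (akrNode m j k) * bp n i x * bp m k y

lemma sum_bp (n : ℕ) (x : ℝ) : ∑ k ∈ Finset.range (n+1), bp n k x = 1 := by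
  have h := add_pow x (1-x) n
  have hx : x + (1-x) = 1 := by ring
  rw [hx, one_pow] at h
  rw [h]
  apply Finset.sum_congr rfl
  intro k _
  simp only [bp]; ring

lemma bp_nonneg (n k : ℕ) (x : ℝ) (hx : x ∈ Icc (0:ℝ) 1) : 0 ≤ bp n k x := by
  have h1 : (0:ℝ) ≤ x := hx.1
  have h2 : (0:ℝ) ≤ 1 - x := by linarith [hx.2]
  exact mul_nonneg (mul_nonneg (Nat.cast_nonneg _) (pow_nonneg h1 _)) (pow_nonneg h2 _)

lemma akrNode_bounds (n j k : ℕ) (hj : 2 ≤ j) (hn : j ≤ n) (hk : k ≤ n) :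
    0 ≤ akrNode n j k ∧ akrNode n j k ≤ (k:ℝ)/n ∧ ((k:ℝ) - ((j:ℝ)-1))/n ≤ akrNode n j k := by
  have hjn : (0:ℕ) < n := lt_of_lt_of_le (by omega) hn
  have hn0 : (0:ℝ) < n := by exact_mod_cast hjn
  have hjne : j ≠ 0 := by omega
  have hj0 : ((j:ℝ))⁻¹ ≠ 0 := by
    have : (j:ℝ) ≠ 0 := Nat.cast_ne_zero.mpr hjne
    exact inv_ne_zero this
  have hQ : 0 < ∏ i ∈ Finset.range j, ((n:ℝ) - i) := by
    apply Finset.prod_pos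
    intro i hi
    have hij : i < j := Finset.mem_range.mp hi
    have : (i:ℝ) < n := by
      have : i < n := lt_of_lt_of_le hij hn
      exact_mod_cast this
    linarith
  rcases lt_or_ge k j with hkj | hkj
  · -- k < j : node = 0
    have hP : ∏ i ∈ Finset.range j, ((k:ℝ) - i) = 0 := by
      apply Finset.prod_eq_zero (Finset.mem_range.mpr hkj)
      simp
    have hnode : akrNode n j k = 0 := by
      rw [akrNode, hP, zero_div, Real.zero_rpow hj0]
    refine ⟨by rw [hnode], by rw [hnode]; positivity, ?_⟩
    rw [hnode]
    apply div_nonpos_of_nonpos_of_nonneg _ hn0.le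
    have : (k:ℝ) + 1 ≤ (j:ℝ) := by exact_mod_cast hkj
    linarith
  · -- j ≤ k
    have hk0 : (j:ℝ) ≤ (k:ℝ) := by exact_mod_cast hkj
    have hkn : (k:ℝ) ≤ n := by exact_mod_cast hk
    set a : ℝ := ((k:ℝ) - ((j:ℝ)-1))/n with ha
    set b : ℝ := (k:ℝ)/n with hb
    have ha0 : 0 ≤ a := by
      apply div_nonneg _ hn0.le
      linarith
    have hb0 : 0 ≤ b := by positivity
    have hprod : (∏ i ∈ Finset.range j, ((k : ℝ) - i)) / (∏ i ∈ Finset.range j, ((n : ℝ) - i))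
        = ∏ i ∈ Finset.range j, (((k:ℝ) - i) / ((n:ℝ) - i)) := by
      rw [Finset.prod_div_distrib]
    have hfacts : ∀ i ∈ Finset.range j, 0 < (n:ℝ) - i ∧ a ≤ ((k:ℝ) - i) / ((n:ℝ) - i)
        ∧ ((k:ℝ) - i) / ((n:ℝ) - i) ≤ b := by
      intro i hi
      have hij : i < j := Finset.mem_range.mp hi
      have hir : (i:ℝ) ≤ (j:ℝ) - 1 := by
        have : (i:ℝ) + 1 ≤ (j:ℝ) := by exact_mod_cast hij
        linarith
      have hd : 0 < (n:ℝ) - i := by linarith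
      refine ⟨hd, ?_, ?_⟩
      · apply div_le_div₀ (by linarith) (by linarith) hd (by linarith)
      · rw [div_le_div_iff₀ hd hn0]
        have hi0 : (0:ℝ) ≤ i := Nat.cast_nonneg i
        nlinarith
    have hlow : a ^ j ≤ (∏ i ∈ Finset.range j, ((k : ℝ) - i)) / (∏ i ∈ Finset.range j, ((n : ℝ) - i)) := by
      rw [hprod]
      calc a ^ j = ∏ _i ∈ Finset.range j, a := by rw [Finset.prod_const, Finset.card_range]
        _ ≤ _ := Finset.prod_le_prod (fun i hi => ha0) (fun i hi => (hfacts i hi).2.1)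
    have hhigh : (∏ i ∈ Finset.range j, ((k : ℝ) - i)) / (∏ i ∈ Finset.range j, ((n : ℝ) - i)) ≤ b ^ j := by
      rw [hprod]
      calc ∏ i ∈ Finset.range j, (((k:ℝ) - i) / ((n:ℝ) - i))
          ≤ ∏ _i ∈ Finset.range j, b :=
            Finset.prod_le_prod (fun i hi => le_trans ha0 (hfacts i hi).2.1)
              (fun i hi => (hfacts i hi).2.2)
        _ = b ^ j := by rw [Finset.prod_const, Finset.card_range]
    have hr0 : 0 ≤ (∏ i ∈ Finset.range j, ((k : ℝ) - i)) / (∏ i ∈ Finset.range j, ((n : ℝ) - i)) :=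
      le_trans (by positivity) hlow
    have hnode0 : 0 ≤ akrNode n j k := Real.rpow_nonneg hr0 _
    have hup : akrNode n j k ≤ b := by
      calc akrNode n j k ≤ (b ^ j) ^ ((j:ℝ))⁻¹ :=
            Real.rpow_le_rpow hr0 hhigh (by positivity)
        _ = b := Real.pow_rpow_inv_natCast hb0 hjne
    have hlo : a ≤ akrNode n j k := by
      calc a = (a ^ j) ^ ((j:ℝ))⁻¹ := (Real.pow_rpow_inv_natCast ha0 hjne).symm
        _ ≤ akrNode n j k := Real.rpow_le_rpow (by positivity) hlow (by positivity)
    exact ⟨hnode0, hup, hlo⟩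

theorem stmt14 (n j : ℕ) (hj : 2 ≤ j) (hn : j ≤ n) (f f' : ℝ → ℝ)
    (hf' : ∀ x ∈ Icc (0:ℝ) 1, HasDerivWithinAt f (f' x) (Icc 0 1) x)
    (hc : ContinuousOn f' (Icc 0 1)) :
    ∀ x ∈ Icc (0:ℝ) 1,
      |bern n f x - akr n j f x| ≤
        (((j : ℝ) - 1) / n) * (⨆ t : Icc (0:ℝ) 1, |f' t|) := by
  intro x hx
  have hjn : (0:ℕ) < n := lt_of_lt_of_le (by omega) hn
  have hn0 : (0:ℝ) < n := by exact_mod_cast hjn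
  set C : ℝ := ⨆ t : Icc (0:ℝ) 1, |f' t| with hCdef
  have hbdd : BddAbove (range fun t : Icc (0:ℝ) 1 => |f' t|) := by
    have : range (fun t : Icc (0:ℝ) 1 => |f' t|) = (fun t => |f' t|) '' (Icc (0:ℝ) 1) := by
      ext y; simp [Subtype.exists]
    rw [this]
    exact (isCompact_Icc.image_of_continuousOn hc.abs).bddAbove
  have hC : ∀ t ∈ Icc (0:ℝ) 1, |f' t| ≤ C := fun t ht => le_ciSup hbdd ⟨t, ht⟩
  have hC0 : 0 ≤ C := le_trans (abs_nonneg _) (hC 0 ⟨le_refl 0, zero_le_one⟩)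
  have hmvt : ∀ a ∈ Icc (0:ℝ) 1, ∀ b ∈ Icc (0:ℝ) 1, |f a - f b| ≤ C * |a - b| := by
    intro a ha b hb
    have := (convex_Icc (0:ℝ) 1).norm_image_sub_le_of_norm_hasDerivWithin_le hf'
      (fun t ht => by rw [Real.norm_eq_abs]; exact hC t ht) hb ha
    simpa [Real.norm_eq_abs] using this
  have hjr : (0:ℝ) ≤ ((j:ℝ) - 1) / n := by
    have : (1:ℝ) ≤ (j:ℝ) := by exact_mod_cast (by omega : 1 ≤ j)
    exact div_nonneg (by linarith) hn0.le
  have key : ∀ k ∈ Finset.range (n+1),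
      |f ((k:ℝ)/n) - f (akrNode n j k)| ≤ (((j:ℝ) - 1) / n) * C := by
    intro k hk
    have hkn : k ≤ n := Nat.lt_succ_iff.mp (Finset.mem_range.mp hk)
    obtain ⟨h0, h1, h2⟩ := akrNode_bounds n j k hj hn hkn
    have hknr : (k:ℝ) ≤ n := by exact_mod_cast hkn
    have hkmem : (k:ℝ)/n ∈ Icc (0:ℝ) 1 := ⟨by positivity, by rw [div_le_one hn0]; exact hknr⟩
    have htmem : akrNode n j k ∈ Icc (0:ℝ) 1 := ⟨h0, le_trans h1 hkmem.2⟩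
    have hdiff : |(k:ℝ)/n - akrNode n j k| ≤ ((j:ℝ) - 1) / n := by
      rw [abs_of_nonneg (by linarith)]
      have : (k:ℝ)/n - ((k:ℝ) - ((j:ℝ)-1))/n = ((j:ℝ) - 1)/n := by ring
      linarith
    calc |f ((k:ℝ)/n) - f (akrNode n j k)| ≤ C * |(k:ℝ)/n - akrNode n j k| :=
          hmvt _ hkmem _ htmem
      _ ≤ C * (((j:ℝ) - 1) / n) := mul_le_mul_of_nonneg_left hdiff hC0
      _ = (((j:ℝ) - 1) / n) * C := mul_comm _ _
  have hdiff : bern n f x - akr n j f x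
      = ∑ k ∈ Finset.range (n+1), (f ((k:ℝ)/n) - f (akrNode n j k)) * bp n k x := by
    rw [bern, akr, ← Finset.sum_sub_distrib]
    apply Finset.sum_congr rfl; intro k _; ring
  rw [hdiff]
  calc |∑ k ∈ Finset.range (n+1), (f ((k:ℝ)/n) - f (akrNode n j k)) * bp n k x|
      ≤ ∑ k ∈ Finset.range (n+1), |(f ((k:ℝ)/n) - f (akrNode n j k)) * bp n k x| :=
        Finset.abs_sum_le_sum_abs _ _
    _ ≤ ∑ k ∈ Finset.range (n+1), (((j:ℝ) - 1) / n) * C * bp n k x := by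
        apply Finset.sum_le_sum
        intro k hk
        rw [abs_mul, abs_of_nonneg (bp_nonneg n k x hx)]
        exact mul_le_mul_of_nonneg_right (key k hk) (bp_nonneg n k x hx)
    _ = (((j:ℝ) - 1) / n) * C := by
        rw [← Finset.mul_sum, sum_bp, mul_one]
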